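/- Let p ≡ 3 (mod 4) be a prime and let l be a Legendre sequence of period p (of either type). Then l has ideal autocorrelation: R_l(τ) = -1 for all τ with 1 ≤ τ ≤ p-1. -/

import Mathlib

open Finset

private lemma sum_quadChar_mul {F : Type*} [Field F] [Fintype F] [DecidableEq F]
    (hF : ringChar F ≠ 2) (b : F) (hb : b ≠ 0) :
    ∑ x : F, quadraticChar F x * quadraticChar F (x + b) = -1 := by
  set χ := quadraticChar F with hχ
  have h0 : ∑ x : F, χ x * χ (x + b) = ∑ x ∈ univ.erase 0, χ x * χ (x + b) := by
    rw [← Finset.add_sum_erase _ _ (mem_univ 0)]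
    simp [hχ]
  rw [h0]
  have hstep : ∀ x ∈ univ.erase 0, χ x * χ (x + b) = χ (1 + b * x⁻¹) := by
    intro x hx
    have hx0 : x ≠ 0 := (Finset.mem_erase.mp hx).1
    have : x + b = x * (1 + b * x⁻¹) := by field_simp
    rw [this, map_mul, ← mul_assoc, ← map_mul, ← sq, quadraticChar_sq_one' hx0, one_mul]
  rw [Finset.sum_congr rfl hstep]
  have hbij : ∑ x ∈ univ.erase 0, χ (1 + b * x⁻¹) = ∑ u ∈ univ.erase 1, χ u := by
    apply Finset.sum_nbij' (i := fun x => 1 + b * x⁻¹) (j := fun u => b * (u - 1)⁻¹)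
    · intro x hx
      have hx0 : x ≠ 0 := (Finset.mem_erase.mp hx).1
      simp only [mem_erase, mem_univ, and_true]
      intro h
      have : b * x⁻¹ = 0 := by linear_combination h
      simp [hb, hx0] at this
    · intro u hu
      have hu1 : u ≠ 1 := (Finset.mem_erase.mp hu).1
      simp only [mem_erase, mem_univ, and_true]
      have : u - 1 ≠ 0 := sub_ne_zero.mpr hu1
      simp [hb, this]
    · intro x hx
      have hx0 : x ≠ 0 := (Finset.mem_erase.mp hx).1
      field_simp
      simp [hb]
    · intro u hu
      have hu1 : u ≠ 1 := (Finset.mem_erase.mp hu).1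
      have : u - 1 ≠ 0 := sub_ne_zero.mpr hu1
      field_simp
      ring
    · intro x hx; rfl
  rw [hbij]
  have := quadraticChar_sum_zero (F := F) hF
  rw [← Finset.add_sum_erase _ _ (mem_univ 1)] at this
  rw [map_one] at this
  linarith

private lemma sign_add (a b : ZMod 2) :
    (-1 : ℤ) ^ ((a + b).val) = (-1) ^ a.val * (-1) ^ b.val := by
  revert a b; decide

/-- Periodic (cross-)correlation of binary sequences of period `N`. -/
def corr (N : ℕ) (a b : ℕ → ZMod 2) (τ : ℕ) : ℤ :=
  ∑ t ∈ Finset.range N, (-1 : ℤ) ^ ((a t + b (t + τ)).val)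

/-- Balance difference `d(a) = 2|support(a)| - K` of a sequence of period `K`. -/
def bal (K : ℕ) (a : ℕ → ZMod 2) : ℤ :=
  2 * ((((Finset.range K).filter (fun k => a k = 1)).card : ℤ)) - (K : ℤ)

/-- A Legendre sequence of period a prime `p ≡ 3 (mod 4)` has ideal autocorrelation. -/
theorem stmt10 (p : ℕ) (hp : p.Prime) (hp4 : p % 4 = 3) (l : ℕ → ZMod 2)
    (hl : ∀ t : ℕ, (t : ZMod p) ≠ 0 → (l t = 0 ↔ IsSquare ((t : ZMod p))))
    (hl0 : ∀ t : ℕ, (t : ZMod p) = 0 → l t = l 0) :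
    ∀ τ : ℕ, 1 ≤ τ → τ < p → corr p l l τ = -1 := by
  intro τ h1 h2
  haveI : Fact p.Prime := ⟨hp⟩
  have hp2 : p ≠ 2 := by omega
  have hchar : ringChar (ZMod p) ≠ 2 := by
    rw [ZMod.ringChar_zmod_n]; exact hp2
  set χ := quadraticChar (ZMod p) with hχ
  set e : ℤ := (-1) ^ ((l 0).val) with he
  set f : ZMod p → ℤ := fun x => if x = 0 then e else χ x with hf
  -- each sign factors through ZMod p
  have two_cases : ∀ a : ZMod 2, a = 0 ∨ a = 1 := by decide
  have hfn : ∀ n : ℕ, (-1 : ℤ) ^ ((l n).val) = f ((n : ZMod p)) := by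
    intro n
    by_cases h : (n : ZMod p) = 0
    · rw [hl0 n h]; simp [hf, h]; exact he.symm
    · simp only [hf, if_neg h]
      rcases two_cases (l n) with h0 | h01
      · rw [h0]
        have := (hl n h).mp h0
        rw [(quadraticChar_one_iff_isSquare h).mpr this]
        rfl
      · rw [h01]
        have hns : ¬ IsSquare ((n : ZMod p)) := by
          intro hs
          have := (hl n h).mpr hs
          rw [h01] at this
          exact one_ne_zero this
        rw [quadraticChar_neg_one_iff_not_isSquare.mpr hns]
        rfl
  -- rewrite corr as a sum over ZMod p
  have hcorr : corr p l l τ = ∑ x : ZMod p, f x * f (x + (τ : ZMod p)) := by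
    rw [corr]
    have hterm : ∀ t : ℕ, (-1 : ℤ) ^ ((l t + l (t + τ)).val)
        = f ((t : ZMod p)) * f ((t : ZMod p) + (τ : ZMod p)) := by
      intro t
      rw [sign_add, hfn, hfn]
      push_cast
      ring_nf
    rw [Finset.sum_congr rfl fun t _ => hterm t]
    refine Finset.sum_nbij' (i := fun t => ((t : ZMod p))) (j := fun x => x.val) ?_ ?_ ?_ ?_ ?_
    · intro t ht; exact mem_univ _
    · intro x hx; exact Finset.mem_range.mpr (ZMod.val_lt x)
    · intro t ht
      exact ZMod.val_natCast_of_lt (Finset.mem_range.mp ht)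
    · intro x hx
      simp [ZMod.natCast_val, ZMod.cast_id]
    · intro t ht; rfl
  set b : ZMod p := (τ : ZMod p) with hb
  have hbne : b ≠ 0 := by
    rw [hb, Ne, ZMod.natCast_eq_zero_iff]
    intro hdvd
    exact absurd (Nat.le_of_dvd (by omega) hdvd) (by omega)
  have hbneg : (0 : ZMod p) ≠ -b := by
    intro h
    exact hbne (neg_eq_zero.mp h.symm)
  -- pointwise comparison with the pure character sum
  have hkey : ∀ x : ZMod p, f x * f (x + b)
      = χ x * χ (x + b) + (if x = 0 then e * χ b else 0)
        + (if x = -b then χ (-b) * e else 0) := by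
    intro x
    by_cases hx0 : x = 0
    · have hxb : x ≠ -b := by rw [hx0]; exact hbneg
      simp only [hx0, if_pos rfl, if_neg hxb.symm]
      have h0b : (0 : ZMod p) + b ≠ 0 := by rwa [zero_add]
      simp [hf, hχ, h0b, zero_add, hbne]
    · by_cases hxb : x = -b
      · have hnb : (-b : ZMod p) ≠ 0 := neg_ne_zero.mpr hbne
        simp only [hxb, if_neg hnb, if_pos rfl]
        simp [hf, hχ, hnb]
      · have hxb0 : x + b ≠ 0 := fun h => hxb (by linear_combination h)
        simp [hf, hx0, hxb0, if_neg hx0, if_neg hxb]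
  have hcm : χ (-b) = - χ b := by
    have : (-b : ZMod p) = (-1) * b := by ring
    rw [this, map_mul, quadraticChar_neg_one hchar, ZMod.card,
      ZMod.χ₄_nat_three_mod_four hp4]
    ring
  rw [hcorr, Finset.sum_congr rfl fun x _ => hkey x]
  rw [Finset.sum_add_distrib, Finset.sum_add_distrib,
    Finset.sum_ite_eq' univ (0 : ZMod p), Finset.sum_ite_eq' univ (-b),
    if_pos (mem_univ _), if_pos (mem_univ _),
    sum_quadChar_mul hchar b hbne, hcm]
  ring
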